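/- Let K be a Hilbert space, Q a positive self-adjoint nuclear operator on K, and Q(t) a positive self-adjoint operator with Q(t) ≤ Q. If Φ : K → K is a bounded operator that restricts to a Hilbert–Schmidt operator from Q^{1/2}(K) to K (i.e. Φ Q^{1/2} ∈ L₂(K)), then ‖Φ Q(t)^{1/2}‖_{L₂(K)} ≤ ‖Φ Q^{1/2}‖_{L₂(K)}. -/
import Mathlib

open RealInnerProductSpace

lemma parseval_sq {K : Type*} [NormedAddCommGroup K] [InnerProductSpace ℝ K] [CompleteSpace K]
    {ι : Type*} (e : HilbertBasis ι ℝ K) (x : K) :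
    HasSum (fun j => ⟪x, e j⟫ ^ 2) (‖x‖ ^ 2) := by
  have h := e.hasSum_inner_mul_inner x x
  simpa [real_inner_comm (e _) x, sq, real_inner_self_eq_norm_sq] using h

lemma parseval_sq_ofReal {K : Type*} [NormedAddCommGroup K] [InnerProductSpace ℝ K]
    [CompleteSpace K] {ι : Type*} (e : HilbertBasis ι ℝ K) (x : K) :
    ENNReal.ofReal (‖x‖ ^ 2) = ∑' j, ENNReal.ofReal (⟪x, e j⟫ ^ 2) := by
  rw [← (parseval_sq e x).tsum_eq]
  exact ENNReal.ofReal_tsum_of_nonneg (fun j => sq_nonneg _) (parseval_sq e x).summable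

lemma double_sum {K : Type*} [NormedAddCommGroup K] [InnerProductSpace ℝ K] [CompleteSpace K]
    {ι : Type*} (e : HilbertBasis ι ℝ K) (T Φ : K →L[ℝ] K)
    (hT_sym : ∀ x y : K, ⟪T x, y⟫ = ⟪x, T y⟫) :
    (∑' i, ENNReal.ofReal (‖Φ (T (e i))‖ ^ 2))
      = ∑' j, ENNReal.ofReal (‖T ((ContinuousLinearMap.adjoint Φ) (e j))‖ ^ 2) := by
  set A := ContinuousLinearMap.adjoint Φ
  calc (∑' i, ENNReal.ofReal (‖Φ (T (e i))‖ ^ 2))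
      = ∑' i, ∑' j, ENNReal.ofReal (⟪Φ (T (e i)), e j⟫ ^ 2) := by
        simp_rw [parseval_sq_ofReal e]
    _ = ∑' j, ∑' i, ENNReal.ofReal (⟪e i, T (A (e j))⟫ ^ 2) := by
        rw [ENNReal.tsum_comm]
        refine tsum_congr fun j => tsum_congr fun i => ?_
        have h1 : ⟪Φ (T (e i)), e j⟫ = ⟪e i, T (A (e j))⟫ := by
          rw [← ContinuousLinearMap.adjoint_inner_right Φ, hT_sym]
        rw [h1]
    _ = ∑' j, ENNReal.ofReal (‖T (A (e j))‖ ^ 2) := by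
        refine tsum_congr fun j => ?_
        rw [parseval_sq_ofReal e (T (A (e j)))]
        exact tsum_congr fun i => by rw [real_inner_comm]

/-- If `0 ≤ Q(t) ≤ Q` (as quadratic forms, with positive self-adjoint square roots
`Qth` and `Qh`) and `Φ` is bounded with `Φ ∘ Qh` Hilbert–Schmidt, then the
Hilbert–Schmidt norm of `Φ ∘ Qth` is bounded by that of `Φ ∘ Qh`:
`‖Φ Q(t)^{1/2}‖_{L₂} ≤ ‖Φ Q^{1/2}‖_{L₂}` (squared norms computed in a Hilbert basis). -/
theorem stmt9 {K : Type*} [NormedAddCommGroup K] [InnerProductSpace ℝ K] [CompleteSpace K]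
    {ι : Type*} (e : HilbertBasis ι ℝ K)
    (Qh Qth Φ : K →L[ℝ] K)
    (hQh_sym : ∀ x y : K, ⟪Qh x, y⟫ = ⟪x, Qh y⟫)
    (hQth_sym : ∀ x y : K, ⟪Qth x, y⟫ = ⟪x, Qth y⟫)
    (hQh_pos : ∀ k : K, 0 ≤ ⟪Qh k, k⟫)
    (hQth_pos : ∀ k : K, 0 ≤ ⟪Qth k, k⟫)
    (hle : ∀ k : K, ⟪Qth (Qth k), k⟫ ≤ ⟪Qh (Qh k), k⟫)
    (hHS : Summable fun i => ‖Φ (Qh (e i))‖ ^ 2) :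
    ∑' i, ‖Φ (Qth (e i))‖ ^ 2 ≤ ∑' i, ‖Φ (Qh (e i))‖ ^ 2 := by
  set A := ContinuousLinearMap.adjoint Φ
  have hnorm : ∀ (T : K →L[ℝ] K), (∀ x y : K, ⟪T x, y⟫ = ⟪x, T y⟫) → ∀ y : K,
      ‖T y‖ ^ 2 = ⟪T (T y), y⟫ := by
    intro T hs y
    rw [hs (T y) y, ← real_inner_self_eq_norm_sq]
  have hpt : ∀ y : K, ‖Qth y‖ ^ 2 ≤ ‖Qh y‖ ^ 2 := fun y => by
    rw [hnorm Qth hQth_sym y, hnorm Qh hQh_sym y]; exact hle y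
  have key : (∑' i, ENNReal.ofReal (‖Φ (Qth (e i))‖ ^ 2))
      ≤ ∑' i, ENNReal.ofReal (‖Φ (Qh (e i))‖ ^ 2) := by
    rw [double_sum e Qth Φ hQth_sym, double_sum e Qh Φ hQh_sym]
    exact ENNReal.tsum_le_tsum fun j => ENNReal.ofReal_le_ofReal (hpt _)
  have hR : (∑' i, ENNReal.ofReal (‖Φ (Qh (e i))‖ ^ 2))
      = ENNReal.ofReal (∑' i, ‖Φ (Qh (e i))‖ ^ 2) :=
    (ENNReal.ofReal_tsum_of_nonneg (fun i => sq_nonneg _) hHS).symm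
  have hRne : (∑' i, ENNReal.ofReal (‖Φ (Qh (e i))‖ ^ 2)) ≠ ⊤ := by
    rw [hR]; exact ENNReal.ofReal_ne_top
  have hLne : (∑' i, ENNReal.ofReal (‖Φ (Qth (e i))‖ ^ 2)) ≠ ⊤ :=
    fun h => hRne (top_le_iff.mp (h ▸ key))
  have hLsum : Summable fun i => ‖Φ (Qth (e i))‖ ^ 2 := by
    have := ENNReal.summable_toReal hLne
    simpa [ENNReal.toReal_ofReal (sq_nonneg _)] using this
  have hL : (∑' i, ENNReal.ofReal (‖Φ (Qth (e i))‖ ^ 2))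
      = ENNReal.ofReal (∑' i, ‖Φ (Qth (e i))‖ ^ 2) :=
    (ENNReal.ofReal_tsum_of_nonneg (fun i => sq_nonneg _) hLsum).symm
  have := ENNReal.toReal_mono hRne key
  rwa [hL, hR, ENNReal.toReal_ofReal (tsum_nonneg fun i => sq_nonneg _),
    ENNReal.toReal_ofReal (tsum_nonneg fun i => sq_nonneg _)] at this
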